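/- Let A be a complete normed unital associative ℝ-algebra (a real Banach algebra). For all x, y ∈ A one has exp(x)·y·exp(−x) = exp(ad_x)(y) = Σ_{k≥0} (ad_x)^k(y)/k!, where ad_x(z) := x·z − z·x; i.e. the conjugation of y by exp(x) is given by the (always convergent) exponential of the adjoint operator ad_x. -/

import Mathlib

open NormedSpace

/-- In a real Banach algebra `A`, for all `x, y ∈ A`,
`exp(x)·y·exp(−x) = exp(ad_x)(y) = Σ_{k≥0} (ad_x)^k(y)/k!`, where
`ad_x(z) = x·z − z·x` (here realized as the continuous linear map
`ContinuousLinearMap.mul ℝ A x - (ContinuousLinearMap.mul ℝ A).flip x`). -/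
theorem exp_conj_eq_exp_ad
    {A : Type*} [NormedRing A] [NormedAlgebra ℝ A] [CompleteSpace A]
    (x y : A) :
    exp x * y * exp (-x)
      = exp (ContinuousLinearMap.mul ℝ A x - (ContinuousLinearMap.mul ℝ A).flip x) y ∧
    exp (ContinuousLinearMap.mul ℝ A x - (ContinuousLinearMap.mul ℝ A).flip x) y
      = ∑' k : ℕ, (k.factorial : ℝ)⁻¹ •
          ((ContinuousLinearMap.mul ℝ A x - (ContinuousLinearMap.mul ℝ A).flip x) ^ k) y := by
  set L := ContinuousLinearMap.mul ℝ A x with hLdef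
  set R := (ContinuousLinearMap.mul ℝ A).flip x with hRdef
  constructor
  · -- ring hom of left multiplication
    let +nondep : NormedAlgebra ℚ A := .restrictScalars ℚ ℝ A
    let +nondep : NormedAlgebra ℚ Aᵐᵒᵖ := .restrictScalars ℚ ℝ Aᵐᵒᵖ
    let +nondep : NormedAlgebra ℚ (A →L[ℝ] A) := .restrictScalars ℚ ℝ (A →L[ℝ] A)
    let f : A →+* (A →L[ℝ] A) :=
      { toFun := fun a => ContinuousLinearMap.mul ℝ A a
        map_one' := by ext z; simp
        map_mul' := by intro a b; ext z; simp [mul_assoc]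
        map_zero' := by ext z; simp
        map_add' := by intro a b; ext z; simp [add_mul] }
    have hfc : Continuous f := (ContinuousLinearMap.mul ℝ A).continuous
    -- ring hom of right multiplication from the opposite algebra
    let g : Aᵐᵒᵖ →+* (A →L[ℝ] A) :=
      { toFun := fun a => (ContinuousLinearMap.mul ℝ A).flip a.unop
        map_one' := by ext z; simp
        map_mul' := by intro a b; ext z; simp [mul_assoc]
        map_zero' := by ext z; simp
        map_add' := by intro a b; ext z; simp [mul_add] }
    have hgc : Continuous g :=
      (ContinuousLinearMap.mul ℝ A).flip.continuous.comp MulOpposite.continuous_unop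
    have hL : exp L = ContinuousLinearMap.mul ℝ A (exp x) :=
      (map_exp f hfc x).symm
    have hR : exp (-R) = (ContinuousLinearMap.mul ℝ A).flip (exp (-x)) := by
      have h1 : exp (g (MulOpposite.op (-x))) = g (exp (MulOpposite.op (-x))) :=
        (map_exp g hgc (MulOpposite.op (-x))).symm
      have h2 : g (MulOpposite.op (-x)) = -R := by
        ext z; simp [g, hRdef, mul_neg]
      rw [h2] at h1
      rw [h1, exp_op]
      rfl
    have hcomm : Commute L (-R) := by
      apply Commute.neg_right
      ext z
      simp [hLdef, hRdef, mul_assoc]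
    have : exp (L - R) = exp L * exp (-R) := by
      rw [sub_eq_add_neg]
      exact exp_add_of_commute hcomm
    rw [this, hL, hR]
    simp [mul_assoc]
  · rw [exp_eq_tsum ℝ]
    have hs : Summable fun k : ℕ => ((k.factorial : ℝ)⁻¹) • (L - R) ^ k :=
      expSeries_summable' (𝕂 := ℝ) (L - R)
    have := (ContinuousLinearMap.apply ℝ A y).map_tsum hs
    simpa using this
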